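/- If all eigenstates |φ_k⟩ of a Hamiltonian on ℂ^{√d} ⊗ ℂ^{√d} are maximally entangled with respect to the bipartition (i.e., ρ_k^{(A)} = I/√d for all k) and the Hamiltonian satisfies NRC, then the time-averaged bipartite OTOC equals (1 − 1/d)². -/

import Mathlib

open Matrix Kronecker BigOperators

noncomputable section

/-- The swap `S_{AA'}` of the two `A` factors in `(H_A ⊗ H_B)^{⊗2}`. -/
def SAA (dA dB : ℕ) :
    Matrix ((Fin dA × Fin dB) × (Fin dA × Fin dB)) ((Fin dA × Fin dB) × (Fin dA × Fin dB)) ℂ :=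
  Matrix.of fun p q =>
    if p.1.1 = q.2.1 ∧ p.2.1 = q.1.1 ∧ p.1.2 = q.1.2 ∧ p.2.2 = q.2.2 then 1 else 0

/-- The bipartite OTOC `G_U = 1 − (1/d²) Tr(S_{AA'} U^{⊗2} S_{AA'} U^{†⊗2})`. -/
def Greal (dA dB : ℕ) (U : Matrix (Fin dA × Fin dB) (Fin dA × Fin dB) ℂ) : ℝ :=
  1 - (1 / ((dA * dB : ℝ))^2) *
    (Matrix.trace (SAA dA dB * (U ⊗ₖ U) * SAA dA dB * (Uᴴ ⊗ₖ Uᴴ))).re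

/-- Reduced density matrix on `A` of a pure state on `ℂ^{d_A} ⊗ ℂ^{d_B}`. -/
def rhoA (dA dB : ℕ) (ψ : Fin dA × Fin dB → ℂ) : Matrix (Fin dA) (Fin dA) ℂ :=
  Matrix.of fun a c => ∑ b : Fin dB, ψ (a, b) * star (ψ (c, b))

/-- Reduced density matrix on `B` of a pure state on `ℂ^{d_A} ⊗ ℂ^{d_B}`. -/
def rhoB (dA dB : ℕ) (ψ : Fin dA × Fin dB → ℂ) : Matrix (Fin dB) (Fin dB) ℂ :=
  Matrix.of fun b b' => ∑ a : Fin dA, ψ (a, b) * star (ψ (a, b'))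

/-- The Hamiltonian `H = Σ_k E_k |φ_k⟩⟨φ_k|`. -/
def hamOf (dA dB : ℕ) (E : Fin (dA * dB) → ℝ) (φ : Fin (dA * dB) → Fin dA × Fin dB → ℂ) :
    Matrix (Fin dA × Fin dB) (Fin dA × Fin dB) ℂ :=
  ∑ k, (E k : ℂ) • Matrix.vecMulVec (φ k) (star (φ k))

/-- The time evolution `U_t = exp(−iHt)`. -/
def evolOf (dA dB : ℕ) (E : Fin (dA * dB) → ℝ) (φ : Fin (dA * dB) → Fin dA × Fin dB → ℂ)
    (t : ℝ) : Matrix (Fin dA × Fin dB) (Fin dA × Fin dB) ℂ :=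
  NormedSpace.exp ((-(t : ℂ) * Complex.I) • hamOf dA dB E φ)

/-! ### Auxiliary material -/

section spectral

variable {n : ℕ}

/-- columns are eigenvectors -/
def Wmat (φ : Fin (n * n) → Fin n × Fin n → ℂ) :
    Matrix (Fin n × Fin n) (Fin n × Fin n) ℂ :=
  Matrix.of fun x j => φ (finProdFinEquiv j) x

lemma Wmat_unitary (φ : Fin (n * n) → Fin n × Fin n → ℂ)
    (hortho : ∀ k l, (∑ x, star (φ k x) * φ l x) = if k = l then 1 else 0) :
    (Wmat φ)ᴴ * Wmat φ = 1 := by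
  ext j j'
  simp only [Matrix.mul_apply, Matrix.conjTranspose_apply, Wmat, Matrix.of_apply,
    Matrix.one_apply]
  rw [hortho]
  simp [Equiv.apply_eq_iff_eq]

lemma conj_sum (φ : Fin (n * n) → Fin n × Fin n → ℂ) (v : Fin (n * n) → ℂ) :
    Wmat φ * Matrix.diagonal (fun j => v (finProdFinEquiv j)) * (Wmat φ)ᴴ
      = ∑ k, v k • Matrix.vecMulVec (φ k) (star (φ k)) := by
  ext x y
  rw [Matrix.mul_apply]
  simp only [Matrix.mul_diagonal, Matrix.conjTranspose_apply, Wmat, Matrix.of_apply,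
    Matrix.sum_apply, Matrix.smul_apply, Matrix.vecMulVec_apply, smul_eq_mul, Pi.star_apply]
  rw [← Equiv.sum_comp finProdFinEquiv (fun k => v k * (φ k x * star (φ k y)))]
  exact Finset.sum_congr rfl fun j _ => by ring

lemma evol_eq (E : Fin (n * n) → ℝ) (φ : Fin (n * n) → Fin n × Fin n → ℂ)
    (hortho : ∀ k l, (∑ x, star (φ k x) * φ l x) = if k = l then 1 else 0) (t : ℝ) :
    evolOf n n E φ t
      = ∑ k, Complex.exp (-(t : ℂ) * Complex.I * (E k)) •
          Matrix.vecMulVec (φ k) (star (φ k)) := by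
  have h1 := Wmat_unitary φ hortho
  have hu : Wmat φ * (Wmat φ)ᴴ = 1 := mul_eq_one_comm.mpr h1
  set Wu : (Matrix (Fin n × Fin n) (Fin n × Fin n) ℂ)ˣ := ⟨Wmat φ, (Wmat φ)ᴴ, hu, h1⟩ with hWu
  have hH : hamOf n n E φ
      = Wmat φ * Matrix.diagonal (fun j => ((E (finProdFinEquiv j) : ℂ))) * (Wmat φ)ᴴ := by
    rw [hamOf, ← conj_sum φ (fun k => (E k : ℂ))]
  have hsmul : (-(t : ℂ) * Complex.I) • hamOf n n E φ
      = Wmat φ * Matrix.diagonal (fun j => (-(t : ℂ) * Complex.I * (E (finProdFinEquiv j)))) *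
        (Wmat φ)ᴴ := by
    rw [hH, ← Matrix.smul_mul, ← Matrix.mul_smul, ← Matrix.diagonal_smul]
    have hfun : ((-(t:ℂ) * Complex.I) • fun j => ((E (finProdFinEquiv j) : ℂ))) =
        (fun j : Fin n × Fin n => -(t:ℂ) * Complex.I * (E (finProdFinEquiv j) : ℂ)) := by
      funext j
      simp only [Pi.smul_apply, smul_eq_mul]
    rw [hfun]
  have hconj : evolOf n n E φ t
      = Wmat φ * NormedSpace.exp
          (Matrix.diagonal (fun j => (-(t : ℂ) * Complex.I * (E (finProdFinEquiv j))))) *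
        (Wmat φ)ᴴ := by
    rw [evolOf, hsmul]
    have := Matrix.exp_units_conj Wu
      (Matrix.diagonal (fun j => (-(t : ℂ) * Complex.I * (E (finProdFinEquiv j)))))
    simpa [hWu] using this
  rw [hconj, Matrix.exp_diagonal, Pi.exp_def,
    ← conj_sum φ (fun k => Complex.exp (-(t : ℂ) * Complex.I * (E k)))]
  simp [← Complex.exp_eq_exp_ℂ]

end spectral

section swap
variable {n : ℕ}

abbrev TT (n : ℕ) := (Fin n × Fin n) × (Fin n × Fin n)

def sigmaSwap (p : TT n) : TT n := ((p.2.1, p.1.2), (p.1.1, p.2.2))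

lemma SAA_apply (p r : TT n) : SAA n n p r = if r = sigmaSwap p then 1 else 0 := by
  simp only [SAA, Matrix.of_apply, sigmaSwap]
  congr 1
  simp only [Prod.ext_iff, eq_iff_iff]
  constructor
  · rintro ⟨h1, h2, h3, h4⟩; exact ⟨⟨h2.symm, h3.symm⟩, ⟨h1.symm, h4.symm⟩⟩
  · rintro ⟨⟨h1, h2⟩, h3, h4⟩; exact ⟨h3.symm, h1.symm, h2.symm, h4.symm⟩

lemma SAA_apply' (r q : TT n) : SAA n n r q = if r = sigmaSwap q then 1 else 0 := by
  simp only [SAA, Matrix.of_apply, sigmaSwap]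
  congr 1
  simp only [Prod.ext_iff, eq_iff_iff]
  constructor
  · rintro ⟨h1, h2, h3, h4⟩; exact ⟨⟨h1, h3⟩, ⟨h2, h4⟩⟩
  · rintro ⟨⟨h1, h2⟩, h3, h4⟩; exact ⟨h1, h3, h2, h4⟩

lemma SAA_mul_apply (M : Matrix (TT n) (TT n) ℂ) (p q : TT n) :
    (SAA n n * M) p q = M (sigmaSwap p) q := by
  rw [Matrix.mul_apply]
  simp [SAA_apply]

lemma mul_SAA_apply (M : Matrix (TT n) (TT n) ℂ) (p q : TT n) :
    (M * SAA n n) p q = M p (sigmaSwap q) := by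
  rw [Matrix.mul_apply]
  simp [SAA_apply']

lemma trace_SMSN (M N : Matrix (TT n) (TT n) ℂ) :
    Matrix.trace (SAA n n * M * SAA n n * N)
      = ∑ p : TT n, ∑ q : TT n, M (sigmaSwap p) (sigmaSwap q) * N q p := by
  have h : ∀ p q : TT n, (SAA n n * M * SAA n n) p q = M (sigmaSwap p) (sigmaSwap q) := by
    intro p q
    rw [mul_SAA_apply, SAA_mul_apply]
  simp [Matrix.trace, Matrix.mul_apply, h]

end swap
section expand
variable {n : ℕ}

lemma mul4_sum {D : Type*} [Fintype D] (A B C Dd : D → ℂ) :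
    (∑ k, A k) * (∑ l, B l) * ((∑ m, C m) * (∑ m', Dd m'))
      = ∑ K : D × D × D × D, A K.1 * B K.2.1 * (C K.2.2.1 * Dd K.2.2.2) := by
  have h : ∀ (F G : D → ℂ), (∑ k, F k) * (∑ l, G l) = ∑ k, ∑ l, F k * G l :=
    fun F G => Finset.sum_mul_sum _ _ _ _
  rw [h A B, h C Dd, h (fun k => ∑ l, A k * B l) (fun m => ∑ m', C m * Dd m')]
  calc ∑ k, ∑ m, (∑ l, A k * B l) * (∑ m', C m * Dd m')
      = ∑ k, ∑ l, ∑ m, ∑ m', A k * B l * (C m * Dd m') := by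
        apply Finset.sum_congr rfl; intro k _
        rw [show (∑ m, (∑ l, A k * B l) * (∑ m', C m * Dd m'))
            = ∑ m, ∑ l, ∑ m', (A k * B l) * (C m * Dd m') from
          Finset.sum_congr rfl fun m _ => by
            rw [h (fun l => A k * B l) (fun m' => C m * Dd m')]]
        exact Finset.sum_comm
    _ = ∑ K : D × D × D × D, A K.1 * B K.2.1 * (C K.2.2.1 * Dd K.2.2.2) := by
        rw [Fintype.sum_prod_type]
        apply Finset.sum_congr rfl; intro k _
        rw [Fintype.sum_prod_type]
        apply Finset.sum_congr rfl; intro l _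
        rw [Fintype.sum_prod_type]

def zval (φ : Fin (n * n) → Fin n × Fin n → ℂ) (k l m m' : Fin (n * n)) : ℂ :=
  ∑ p : TT n, φ k (sigmaSwap p).1 * φ l (sigmaSwap p).2 * star (φ m p.1) * star (φ m' p.2)

lemma trace_U (φ : Fin (n * n) → Fin n × Fin n → ℂ) (c : Fin (n * n) → ℂ)
    (U : Matrix (Fin n × Fin n) (Fin n × Fin n) ℂ)
    (hU : ∀ x y, U x y = ∑ k, c k * (φ k x * star (φ k y))) :
    Matrix.trace (SAA n n * (U ⊗ₖ U) * SAA n n * (Uᴴ ⊗ₖ Uᴴ))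
      = ∑ K : Fin (n * n) × Fin (n * n) × Fin (n * n) × Fin (n * n),
          (c K.1 * c K.2.1 * star (c K.2.2.1) * star (c K.2.2.2)) *
            (zval φ K.1 K.2.1 K.2.2.1 K.2.2.2 * star (zval φ K.1 K.2.1 K.2.2.1 K.2.2.2)) := by
  classical
  set f : Fin (n * n) × Fin (n * n) × Fin (n * n) × Fin (n * n) → TT n → ℂ := fun K p =>
    φ K.1 (sigmaSwap p).1 * φ K.2.1 (sigmaSwap p).2 * star (φ K.2.2.1 p.1) *
      star (φ K.2.2.2 p.2) with hf
  rw [trace_SMSN]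
  have hpt : ∀ p q : TT n,
      (U ⊗ₖ U) (sigmaSwap p) (sigmaSwap q) * (Uᴴ ⊗ₖ Uᴴ) q p
        = ∑ K : Fin (n * n) × Fin (n * n) × Fin (n * n) × Fin (n * n),
            (c K.1 * c K.2.1 * star (c K.2.2.1) * star (c K.2.2.2)) *
              (f K p * star (f K q)) := by
    intro p q
    simp only [Matrix.kroneckerMap_apply, Matrix.conjTranspose_apply, hU, star_sum, star_mul',
      star_star]
    rw [mul4_sum]
    apply Finset.sum_congr rfl
    intro K _
    simp only [hf, star_mul', star_star]
    ring
  calc ∑ p : TT n, ∑ q : TT n, (U ⊗ₖ U) (sigmaSwap p) (sigmaSwap q) * (Uᴴ ⊗ₖ Uᴴ) q p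
      = ∑ p : TT n, ∑ q : TT n,
          ∑ K : Fin (n * n) × Fin (n * n) × Fin (n * n) × Fin (n * n),
            (c K.1 * c K.2.1 * star (c K.2.2.1) * star (c K.2.2.2)) *
              (f K p * star (f K q)) := by
        apply Finset.sum_congr rfl; intro p _
        apply Finset.sum_congr rfl; intro q _
        exact hpt p q
    _ = ∑ K : Fin (n * n) × Fin (n * n) × Fin (n * n) × Fin (n * n),
          ∑ p : TT n, ∑ q : TT n,
            (c K.1 * c K.2.1 * star (c K.2.2.1) * star (c K.2.2.2)) *
              (f K p * star (f K q)) := by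
        have h2 : ∀ p : TT n,
            (∑ q : TT n, ∑ K : Fin (n * n) × Fin (n * n) × Fin (n * n) × Fin (n * n),
              (c K.1 * c K.2.1 * star (c K.2.2.1) * star (c K.2.2.2)) * (f K p * star (f K q)))
            = ∑ K : Fin (n * n) × Fin (n * n) × Fin (n * n) × Fin (n * n), ∑ q : TT n,
              (c K.1 * c K.2.1 * star (c K.2.2.1) * star (c K.2.2.2)) * (f K p * star (f K q)) :=
          fun p => Finset.sum_comm
        simp_rw [h2]
        exact Finset.sum_comm
    _ = ∑ K : Fin (n * n) × Fin (n * n) × Fin (n * n) × Fin (n * n),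
          (c K.1 * c K.2.1 * star (c K.2.2.1) * star (c K.2.2.2)) *
            (zval φ K.1 K.2.1 K.2.2.1 K.2.2.2 * star (zval φ K.1 K.2.1 K.2.2.1 K.2.2.2)) := by
        apply Finset.sum_congr rfl; intro K _
        have h1 : ∑ p : TT n, ∑ q : TT n,
            (c K.1 * c K.2.1 * star (c K.2.2.1) * star (c K.2.2.2)) * (f K p * star (f K q))
            = (c K.1 * c K.2.1 * star (c K.2.2.1) * star (c K.2.2.2)) *
                ((∑ p : TT n, f K p) * (∑ q : TT n, star (f K q))) := by
          rw [Finset.sum_mul_sum]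
          simp_rw [Finset.mul_sum]
        rw [h1, ← star_sum]
        rfl

end expand


section eval
variable {n : ℕ}

lemma sum_TT (g : TT n → ℂ) :
    ∑ p : TT n, g p
      = ∑ a : Fin n, ∑ b : Fin n, ∑ a' : Fin n, ∑ b' : Fin n, g ((a, b), (a', b')) := by
  rw [Fintype.sum_prod_type, Fintype.sum_prod_type]
  apply Finset.sum_congr rfl; intro a _
  apply Finset.sum_congr rfl; intro b _
  rw [Fintype.sum_prod_type]

lemma zval_klkl (φ : Fin (n * n) → Fin n × Fin n → ℂ) (k l : Fin (n * n)) :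
    zval φ k l k l
      = ∑ a : Fin n, ∑ a' : Fin n, rhoA n n (φ k) a' a * rhoA n n (φ l) a a' := by
  rw [zval, sum_TT]
  apply Finset.sum_congr rfl; intro a _
  rw [Finset.sum_comm]
  apply Finset.sum_congr rfl; intro a' _
  simp only [rhoA, Matrix.of_apply]
  rw [Finset.sum_mul_sum]
  apply Finset.sum_congr rfl; intro b _
  apply Finset.sum_congr rfl; intro b' _
  simp only [sigmaSwap]
  ring

lemma zval_kllk (φ : Fin (n * n) → Fin n × Fin n → ℂ) (k l : Fin (n * n)) :
    zval φ k l l k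
      = ∑ b : Fin n, ∑ b' : Fin n, rhoB n n (φ k) b b' * rhoB n n (φ l) b' b := by
  rw [zval, sum_TT]
  -- summand: φ k (a',b) * φ l (a,b') * star (φ l (a,b)) * star (φ k (a',b'))
  -- goal grouping: over b, b' loops with inner sums over a', a
  rw [Finset.sum_comm]
  apply Finset.sum_congr rfl; intro b _
  -- now ∑ a ∑ a' ∑ b' ...
  rw [show (∑ a : Fin n, ∑ a' : Fin n, ∑ b' : Fin n,
        φ k ((sigmaSwap ((a, b), (a', b'))).1) * φ l ((sigmaSwap ((a, b), (a', b'))).2) *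
          star (φ l (a, b)) * star (φ k (a', b')))
      = ∑ b' : Fin n, ∑ a : Fin n, ∑ a' : Fin n,
        φ k ((sigmaSwap ((a, b), (a', b'))).1) * φ l ((sigmaSwap ((a, b), (a', b'))).2) *
          star (φ l (a, b)) * star (φ k (a', b')) from ?_]
  · apply Finset.sum_congr rfl; intro b' _
    simp only [rhoB, Matrix.of_apply]
    rw [Finset.sum_mul_sum]
    rw [Finset.sum_comm]
    apply Finset.sum_congr rfl; intro a _
    apply Finset.sum_congr rfl; intro a' _
    simp only [sigmaSwap]
    ring
  · exact (Finset.sum_congr rfl fun a _ => Finset.sum_comm).trans Finset.sum_comm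

lemma rhoB_of_rhoA (hn : 0 < n) (ψ : Fin n × Fin n → ℂ)
    (h : rhoA n n ψ = ((n : ℂ))⁻¹ • (1 : Matrix (Fin n) (Fin n) ℂ)) :
    rhoB n n ψ = ((n : ℂ))⁻¹ • (1 : Matrix (Fin n) (Fin n) ℂ) := by
  have hn0 : ((n : ℂ)) ≠ 0 := by
    simpa using hn.ne'
  set Ψ : Matrix (Fin n) (Fin n) ℂ := Matrix.of fun a b => ψ (a, b) with hΨ
  have hA : Ψ * Ψᴴ = ((n : ℂ))⁻¹ • 1 := by
    rw [← h]
    ext a c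
    simp [rhoA, Matrix.mul_apply, Matrix.conjTranspose_apply, hΨ]
  have h1 : Ψ * ((n : ℂ) • Ψᴴ) = 1 := by
    rw [Matrix.mul_smul, hA, smul_smul, mul_inv_cancel₀ hn0, one_smul]
  have h2 : ((n : ℂ) • Ψᴴ) * Ψ = 1 := mul_eq_one_comm.mp h1
  have h3 : Ψᴴ * Ψ = ((n : ℂ))⁻¹ • 1 := by
    rw [Matrix.smul_mul] at h2
    rw [← h2, smul_smul, inv_mul_cancel₀ hn0, one_smul]
  ext b b'
  have := congrArg (fun M => M b' b) h3
  simp only [Matrix.mul_apply, Matrix.conjTranspose_apply] at this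
  simp only [rhoB, Matrix.of_apply]
  rw [show (∑ a : Fin n, ψ (a, b) * star (ψ (a, b')))
      = ∑ a : Fin n, star (Ψ a b') * Ψ a b from Finset.sum_congr rfl fun a _ => by
        simp [hΨ]; ring]
  rw [this]
  simp [Matrix.one_apply, eq_comm]

lemma sum_rho_eval (hn : 0 < n) (M N : Matrix (Fin n) (Fin n) ℂ)
    (hM : M = ((n : ℂ))⁻¹ • 1) (hN : N = ((n : ℂ))⁻¹ • 1) :
    ∑ x : Fin n, ∑ y : Fin n, M x y * N y x = ((n : ℂ))⁻¹ := by
  have hn0 : ((n : ℂ)) ≠ 0 := by simpa using hn.ne'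
  subst hM hN
  simp only [Matrix.smul_apply, Matrix.one_apply, smul_eq_mul]
  rw [show (∑ x : Fin n, ∑ y : Fin n,
      ((n:ℂ))⁻¹ * (if x = y then 1 else 0) * (((n:ℂ))⁻¹ * (if y = x then 1 else 0)))
    = ∑ x : Fin n, ((n:ℂ))⁻¹ * ((n:ℂ))⁻¹ from Finset.sum_congr rfl fun x _ => by
      rw [Finset.sum_eq_single x] <;> simp +contextual [eq_comm]]
  rw [Finset.sum_const]
  simp [Finset.card_univ]
  field_simp

lemma sum_rho_eval' (hn : 0 < n) (M N : Matrix (Fin n) (Fin n) ℂ)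
    (hM : M = ((n : ℂ))⁻¹ • 1) (hN : N = ((n : ℂ))⁻¹ • 1) :
    ∑ x : Fin n, ∑ y : Fin n, M y x * N x y = ((n : ℂ))⁻¹ := by
  have hn0 : ((n : ℂ)) ≠ 0 := by simpa using hn.ne'
  subst hM hN
  simp only [Matrix.smul_apply, Matrix.one_apply, smul_eq_mul]
  rw [show (∑ x : Fin n, ∑ y : Fin n,
      ((n:ℂ))⁻¹ * (if y = x then 1 else 0) * (((n:ℂ))⁻¹ * (if x = y then 1 else 0)))
    = ∑ x : Fin n, ((n:ℂ))⁻¹ * ((n:ℂ))⁻¹ from Finset.sum_congr rfl fun x _ => by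
      rw [Finset.sum_eq_single x] <;> simp +contextual [eq_comm]]
  rw [Finset.sum_const]
  simp [Finset.card_univ]
  field_simp

set_option linter.unusedTactic false in
lemma countA (N : ℕ) (v : ℝ) :
    (∑ a : Fin N, ∑ b : Fin N, ∑ c : Fin N, ∑ d : Fin N,
      if a = c ∧ b = d then v else 0) = ((N:ℝ))^2 * v := by
  have h : ∀ a b c d : Fin N, (if a = c ∧ b = d then v else 0)
      = (if a = c then (1:ℝ) else 0) * (if b = d then v else 0) := by
    intro a b c d
    by_cases h1 : a = c <;> by_cases h2 : b = d <;> simp [h1, h2]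
  simp only [h, ← Finset.mul_sum, ← Finset.sum_mul, Finset.sum_ite_eq, Finset.mem_univ,
    if_true, one_mul, Finset.sum_const, Finset.card_univ, Fintype.card_fin, nsmul_eq_mul]
  push_cast
  ring

lemma countB (N : ℕ) (v : ℝ) :
    (∑ a : Fin N, ∑ b : Fin N, ∑ c : Fin N, ∑ d : Fin N,
      if a = d ∧ b = c then v else 0) = ((N:ℝ))^2 * v := by
  have h : ∀ a b c d : Fin N, (if a = d ∧ b = c then v else 0)
      = (if b = c then (1:ℝ) else 0) * (if a = d then v else 0) := by
    intro a b c d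
    by_cases h1 : a = d <;> by_cases h2 : b = c <;> simp [h1, h2]
  simp only [h, ← Finset.mul_sum, ← Finset.sum_mul, Finset.sum_ite_eq, Finset.mem_univ,
    if_true, one_mul, Finset.sum_const, Finset.card_univ, Fintype.card_fin, nsmul_eq_mul]
  push_cast
  ring

lemma countC (N : ℕ) (v : ℝ) :
    (∑ a : Fin N, ∑ b : Fin N, ∑ c : Fin N, ∑ d : Fin N,
      if a = c ∧ b = d ∧ a = b then v else 0) = ((N:ℝ)) * v := by
  have h : ∀ a b c d : Fin N, (if a = c ∧ b = d ∧ a = b then v else 0)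
      = (if a = c then (1:ℝ) else 0) * ((if b = d then (1:ℝ) else 0) * (if a = b then v else 0)) := by
    intro a b c d
    by_cases h1 : a = c <;> by_cases h2 : b = d <;> by_cases h3 : a = b <;> simp_all
  simp only [h, ← Finset.mul_sum, ← Finset.sum_mul, Finset.sum_ite_eq, Finset.mem_univ,
    if_true, one_mul, Finset.sum_const, Finset.card_univ, Fintype.card_fin, nsmul_eq_mul]
  all_goals (push_cast; ring)

lemma sum_prod4 {α : Type*} [Fintype α] {M : Type*} [AddCommMonoid M] (F : α × α × α × α → M) :
    ∑ K, F K = ∑ a, ∑ b, ∑ c, ∑ d, F (a, b, c, d) := by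
  rw [Fintype.sum_prod_type]
  apply Finset.sum_congr rfl; intro a _
  rw [Fintype.sum_prod_type]
  apply Finset.sum_congr rfl; intro b _
  rw [Fintype.sum_prod_type]

end eval

lemma avg_exp (ω : ℝ) (c : ℂ) :
    Filter.Tendsto
      (fun T : ℝ => (1 / T) * ∫ t in (0:ℝ)..T, (Complex.exp ((ω:ℂ) * Complex.I * t) * c).re)
      Filter.atTop (nhds (if ω = 0 then c.re else 0)) := by
  by_cases hw : ω = 0
  · simp only [hw, if_pos rfl]
    subst hw
    apply Filter.Tendsto.congr' _ (tendsto_const_nhds (x := c.re))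
    filter_upwards [Filter.eventually_ge_atTop (1:ℝ)] with T hT
    have hT0 : T ≠ 0 := by linarith
    simp [intervalIntegral.integral_const, hT0]
  · simp only [if_neg hw]
    have hc : ((ω:ℂ) * Complex.I) ≠ 0 := by
      simp [Complex.ext_iff, hw, Complex.I_ne_zero]
    have hcont : ∀ T : ℝ, (∫ t in (0:ℝ)..T, (Complex.exp ((ω:ℂ) * Complex.I * t) * c).re)
        = ((Complex.exp ((ω:ℂ) * Complex.I * T) - 1) / ((ω:ℂ) * Complex.I) * c).re := by
      intro T
      have hint : IntervalIntegrable (fun t : ℝ => Complex.exp ((ω:ℂ) * Complex.I * t) * c)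
          MeasureTheory.volume 0 T := by
        apply Continuous.intervalIntegrable
        exact (Complex.continuous_exp.comp (by continuity)).mul continuous_const
      have h1 : (∫ t in (0:ℝ)..T, Complex.reCLM (Complex.exp ((ω:ℂ) * Complex.I * t) * c))
          = Complex.reCLM (∫ t in (0:ℝ)..T, Complex.exp ((ω:ℂ) * Complex.I * t) * c) :=
        Complex.reCLM.intervalIntegral_comp_comm hint
      simp only [Complex.reCLM_apply] at h1
      rw [h1]
      congr 1
      rw [intervalIntegral.integral_mul_const, integral_exp_mul_complex hc]
      simp
    apply squeeze_zero_norm' _ _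
    · exact fun T => (1 / T) * (2 * ‖c‖ / ‖(ω:ℂ) * Complex.I‖)
    · filter_upwards [Filter.eventually_ge_atTop (1:ℝ)] with T hT
      rw [hcont]
      have hTpos : (0:ℝ) < T := by linarith
      rw [Real.norm_eq_abs, abs_mul, abs_of_pos (by positivity : (0:ℝ) < 1 / T)]
      apply mul_le_mul_of_nonneg_left _ (by positivity)
      calc |((Complex.exp ((ω:ℂ) * Complex.I * T) - 1) / ((ω:ℂ) * Complex.I) * c).re|
          ≤ ‖(Complex.exp ((ω:ℂ) * Complex.I * T) - 1) / ((ω:ℂ) * Complex.I) * c‖ :=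
            Complex.abs_re_le_norm _
        _ ≤ 2 * ‖c‖ / ‖(ω:ℂ) * Complex.I‖ := by
            rw [norm_mul, norm_div, div_mul_eq_mul_div]
            gcongr
            calc ‖Complex.exp ((ω:ℂ) * Complex.I * T) - 1‖
                ≤ ‖Complex.exp ((ω:ℂ) * Complex.I * T)‖ + ‖(1:ℂ)‖ := by
                  simpa using norm_sub_le
                    (Complex.exp ((ω:ℂ) * Complex.I * T)) 1
              _ ≤ 2 := by
                  rw [Complex.norm_exp]
                  simp
                  norm_num
    · have : Filter.Tendsto (fun T : ℝ => T⁻¹) Filter.atTop (nhds 0) :=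
        tendsto_inv_atTop_zero
      simpa [one_div] using this.mul_const (2 * ‖c‖ / ‖(ω:ℂ) * Complex.I‖)

/-- If all eigenstates of an NRC Hamiltonian on `ℂ^{√d} ⊗ ℂ^{√d}` are maximally
entangled, the time-averaged bipartite OTOC equals `(1 − 1/d)²`. -/
theorem otoc_time_average_max_entangled (n : ℕ) (hn : 0 < n)
    (E : Fin (n * n) → ℝ) (φ : Fin (n * n) → Fin n × Fin n → ℂ)
    (hortho : ∀ k l, (∑ x, star (φ k x) * φ l x) = if k = l then 1 else 0)
    (hNRC : ∀ k l m n', E k + E l = E m + E n' → (k = m ∧ l = n') ∨ (k = n' ∧ l = m))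
    (hME : ∀ k, rhoA n n (φ k) = ((n : ℂ))⁻¹ • (1 : Matrix (Fin n) (Fin n) ℂ)) :
    Filter.Tendsto
      (fun T : ℝ => (1 / T) * ∫ t in (0 : ℝ)..T, Greal n n (evolOf n n E φ t))
      Filter.atTop
      (nhds ((1 - 1 / ((n * n : ℝ)))^2)) := by
  classical
  have hn0R : ((n : ℝ)) ≠ 0 := by simpa using hn.ne'
  set ωf : Fin (n*n) × Fin (n*n) × Fin (n*n) × Fin (n*n) → ℝ :=
    fun K => E K.2.2.1 + E K.2.2.2 - E K.1 - E K.2.1 with hωf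
  set zz : Fin (n*n) × Fin (n*n) × Fin (n*n) × Fin (n*n) → ℂ :=
    fun K => zval φ K.1 K.2.1 K.2.2.1 K.2.2.2 * star (zval φ K.1 K.2.1 K.2.2.1 K.2.2.2) with hzz
  set A : ℝ := 1 / ((n:ℝ) * (n:ℝ))^2 with hA
  -- Step 1: pointwise formula for the OTOC
  have hGr : ∀ t : ℝ, Greal n n (evolOf n n E φ t)
      = 1 - A * ∑ K, (Complex.exp ((ωf K : ℂ) * Complex.I * t) * zz K).re := by
    intro t
    have hU : ∀ x y, evolOf n n E φ t x y
        = ∑ k, Complex.exp (-(t:ℂ) * Complex.I * (E k)) * (φ k x * star (φ k y)) := by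
      intro x y
      rw [evol_eq E φ hortho t]
      simp [Matrix.sum_apply, Matrix.vecMulVec_apply, mul_assoc]
    have htr : Matrix.trace (SAA n n * (evolOf n n E φ t ⊗ₖ evolOf n n E φ t) * SAA n n *
          ((evolOf n n E φ t)ᴴ ⊗ₖ (evolOf n n E φ t)ᴴ))
        = ∑ K, Complex.exp ((ωf K : ℂ) * Complex.I * t) * zz K := by
      rw [trace_U φ (fun k => Complex.exp (-(t:ℂ) * Complex.I * (E k))) _ hU]
      apply Finset.sum_congr rfl; intro K _
      congr 1
      simp only [Complex.star_def]
      rw [← Complex.exp_conj, ← Complex.exp_conj,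
        ← Complex.exp_add, ← Complex.exp_add, ← Complex.exp_add]
      congr 1
      simp only [map_neg, _root_.map_mul, Complex.conj_I, Complex.conj_ofReal, hωf]
      push_cast
      ring
    simp only [Greal, htr, Complex.re_sum, hA]
  -- Step 2: integrand functions and their integrals
  have hFKcont : ∀ K, Continuous (fun t : ℝ => (Complex.exp ((ωf K:ℂ) * Complex.I * t) * zz K).re) := by
    intro K
    exact Complex.continuous_re.comp ((Complex.continuous_exp.comp (by continuity)).mul
      continuous_const)
  have heq : ∀ᶠ T in Filter.atTop,
      (1 / T) * ∫ t in (0:ℝ)..T, Greal n n (evolOf n n E φ t)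
        = 1 - A * ∑ K, ((1 / T) * ∫ t in (0:ℝ)..T,
            (Complex.exp ((ωf K:ℂ) * Complex.I * t) * zz K).re) := by
    filter_upwards [Filter.eventually_ge_atTop (1:ℝ)] with T hT
    have hT0 : T ≠ 0 := by linarith
    have h1 : (∫ t in (0:ℝ)..T, Greal n n (evolOf n n E φ t))
        = ∫ t in (0:ℝ)..T,
            (1 - A * ∑ K, (Complex.exp ((ωf K:ℂ) * Complex.I * t) * zz K).re) := by
      apply intervalIntegral.integral_congr
      intro t _
      exact hGr t
    have hPint : IntervalIntegrable
        (fun t : ℝ => ∑ K, (Complex.exp ((ωf K:ℂ) * Complex.I * t) * zz K).re)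
        MeasureTheory.volume 0 T :=
      (continuous_finset_sum _ fun K _ => hFKcont K).intervalIntegrable _ _
    rw [h1, intervalIntegral.integral_sub intervalIntegrable_const (hPint.const_mul A),
      intervalIntegral.integral_const_mul,
      intervalIntegral.integral_finset_sum
        (fun K _ => (hFKcont K).intervalIntegrable _ _)]
    rw [← Finset.mul_sum, intervalIntegral.integral_const]
    rw [sub_zero, smul_eq_mul, mul_one, mul_sub, one_div_mul_cancel hT0]
    ring
  -- Step 3: the limit of each averaged term
  have hlim : Filter.Tendsto
      (fun T : ℝ => ∑ K, ((1 / T) * ∫ t in (0:ℝ)..T,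
          (Complex.exp ((ωf K:ℂ) * Complex.I * t) * zz K).re))
      Filter.atTop (nhds (∑ K, if ωf K = 0 then (zz K).re else 0)) :=
    tendsto_finset_sum _ (fun K _ => avg_exp (ωf K) (zz K))
  have hfull : Filter.Tendsto
      (fun T : ℝ => 1 - A * ∑ K, ((1 / T) * ∫ t in (0:ℝ)..T,
          (Complex.exp ((ωf K:ℂ) * Complex.I * t) * zz K).re))
      Filter.atTop (nhds (1 - A * ∑ K, if ωf K = 0 then (zz K).re else 0)) :=
    Filter.Tendsto.const_sub 1 (hlim.const_mul A)
  -- Step 4: evaluate the limit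
  have hval : (1 : ℝ) - A * (∑ K, if ωf K = 0 then (zz K).re else 0)
      = (1 - 1 / ((n * n : ℝ)))^2 := by
    have hz1 : ∀ k l, zval φ k l k l = ((n:ℂ))⁻¹ := fun k l => by
      rw [zval_klkl]; exact sum_rho_eval' hn _ _ (hME k) (hME l)
    have hz2 : ∀ k l, zval φ k l l k = ((n:ℂ))⁻¹ := fun k l => by
      rw [zval_kllk]
      exact sum_rho_eval hn _ _ (rhoB_of_rhoA hn _ (hME k)) (rhoB_of_rhoA hn _ (hME l))
    set v : ℝ := (n:ℝ)⁻¹ * (n:ℝ)⁻¹ with hv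
    have hre : ((((n:ℂ))⁻¹ : ℂ) * star (((n:ℂ))⁻¹ : ℂ)).re = v := by
      have hcast : ((n:ℂ))⁻¹ = (((n:ℝ)⁻¹ : ℝ) : ℂ) := by push_cast; ring
      rw [hcast, Complex.star_def, Complex.conj_ofReal, ← Complex.ofReal_mul]
      simp [hv]
    have hterm : ∀ K : Fin (n*n) × Fin (n*n) × Fin (n*n) × Fin (n*n),
        (if ωf K = 0 then (zz K).re else 0)
          = ((if K.1 = K.2.2.1 ∧ K.2.1 = K.2.2.2 then v else 0)
            + (if K.1 = K.2.2.2 ∧ K.2.1 = K.2.2.1 then v else 0))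
            - (if K.1 = K.2.2.1 ∧ K.2.1 = K.2.2.2 ∧ K.1 = K.2.1 then v else 0) := by
      rintro ⟨k, l, m, m'⟩
      simp only [hωf, hzz]
      by_cases h0 : E m + E m' - E k - E l = 0
      · rw [if_pos h0]
        rcases hNRC k l m m' (by linarith) with ⟨h1, h2⟩ | ⟨h1, h2⟩
        · subst h1; subst h2
          rw [hz1, hre]
          by_cases hkl : k = l <;> simp [hkl]
        · subst h1; subst h2
          rw [hz2, hre]
          by_cases hkl : k = l <;> simp [hkl]
      · rw [if_neg h0]
        have hP1 : ¬(k = m ∧ l = m') := by rintro ⟨rfl, rfl⟩; exact h0 (by ring)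
        have hP2 : ¬(k = m' ∧ l = m) := by rintro ⟨rfl, rfl⟩; exact h0 (by ring)
        have hP3 : ¬(k = m ∧ l = m' ∧ k = l) := fun h => hP1 ⟨h.1, h.2.1⟩
        simp [hP1, hP2, hP3]
    rw [Finset.sum_congr rfl (fun K _ => hterm K)]
    have hS1 : (∑ K : Fin (n*n) × Fin (n*n) × Fin (n*n) × Fin (n*n),
        if K.1 = K.2.2.1 ∧ K.2.1 = K.2.2.2 then v else 0) = (((n*n : ℕ)):ℝ)^2 * v := by
      rw [sum_prod4]
      exact countA (n*n) v
    have hS2 : (∑ K : Fin (n*n) × Fin (n*n) × Fin (n*n) × Fin (n*n),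
        if K.1 = K.2.2.2 ∧ K.2.1 = K.2.2.1 then v else 0) = (((n*n : ℕ)):ℝ)^2 * v := by
      rw [sum_prod4]
      exact countB (n*n) v
    have hS3 : (∑ K : Fin (n*n) × Fin (n*n) × Fin (n*n) × Fin (n*n),
        if K.1 = K.2.2.1 ∧ K.2.1 = K.2.2.2 ∧ K.1 = K.2.1 then v else 0)
          = (((n*n : ℕ)):ℝ) * v := by
      rw [sum_prod4]
      exact countC (n*n) v
    rw [Finset.sum_sub_distrib, Finset.sum_add_distrib, hS1, hS2, hS3]
    simp only [hA, hv]
    push_cast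
    field_simp
    ring
  rw [← hval]
  have heq' : (fun T : ℝ => 1 - A * ∑ K, ((1 / T) * ∫ t in (0:ℝ)..T,
      (Complex.exp ((ωf K:ℂ) * Complex.I * t) * zz K).re))
      =ᶠ[Filter.atTop]
      (fun T : ℝ => (1 / T) * ∫ t in (0 : ℝ)..T, Greal n n (evolOf n n E φ t)) :=
    Filter.EventuallyEq.symm heq
  exact Filter.Tendsto.congr' heq' hfull
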